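/- The optimal dynamic value is subadditive in the universe of products: for all U_1, U_2 ⊆ {1,…,n}, OPT^DP(U_1 ∪ U_2) ≤ OPT^DP(U_1) + OPT^DP(U_2). -/

import Mathlib

open Finset

/-- MNL choice probability of product `i` when assortment `S` is offered. -/
noncomputable def phi {n : ℕ} (v : Fin n → ℝ) (S : Finset (Fin n)) (i : Fin n) : ℝ :=
  v i / (1 + ∑ j ∈ S, v j)

/-- MNL no-purchase probability when assortment `S` is offered. -/
noncomputable def phi0 {n : ℕ} (v : Fin n → ℝ) (S : Finset (Fin n)) : ℝ :=
  1 / (1 + ∑ j ∈ S, v j)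

/-- The dynamic-programming value functions `M_t(ℓ)` of the adaptive maximum load
problem over the universe `U`: `M_0(ℓ) = max_i ℓ_i` and
`M_t(ℓ) = max_{S ⊆ U} (φ_0(S)·M_{t-1}(ℓ) + ∑_{i∈S} φ_i(S)·M_{t-1}(ℓ + e_i))`. -/
noncomputable def dpVal {n : ℕ} (v : Fin n → ℝ) (U : Finset (Fin n)) :
    ℕ → (Fin n → ℕ) → ℝ
  | 0, ℓ => ((Finset.univ.sup ℓ : ℕ) : ℝ)
  | t + 1, ℓ =>
      U.powerset.sup' ⟨∅, Finset.empty_mem_powerset U⟩ fun S =>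
        phi0 v S * dpVal v U t ℓ +
          ∑ i ∈ S, phi v S i * dpVal v U t (Function.update ℓ i (ℓ i + 1))

/-- `OPT^DP(U) = M_T(0)`: the optimal expected maximum load achievable by an adaptive
policy offering assortments from the universe `U` to `T` sequentially arriving customers
making independent MNL choices. -/
noncomputable def dpOpt {n : ℕ} (v : Fin n → ℝ) (U : Finset (Fin n)) (T : ℕ) : ℝ :=
  dpVal v U T fun _ => 0

section aux

variable {n : ℕ} {v : Fin n → ℝ} (hv : ∀ i, 0 < v i)
include hv

lemma denom_pos (S : Finset (Fin n)) : 0 < 1 + ∑ j ∈ S, v j :=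
  add_pos_of_pos_of_nonneg one_pos (Finset.sum_nonneg fun i _ => (hv i).le)

lemma phi0_nonneg (S : Finset (Fin n)) : 0 ≤ phi0 v S :=
  le_of_lt (div_pos one_pos (denom_pos hv S))

lemma phi_nonneg (S : Finset (Fin n)) (i : Fin n) : 0 ≤ phi v S i :=
  div_nonneg (hv i).le (denom_pos hv S).le

lemma phi0_add_sum (S : Finset (Fin n)) : phi0 v S + ∑ i ∈ S, phi v S i = 1 := by
  have h := (denom_pos hv S).ne'
  simp only [phi, phi0, ← Finset.sum_div]
  field_simp

lemma phi_anti {S₁ S : Finset (Fin n)} (h : S₁ ⊆ S) (i : Fin n) :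
    phi v S i ≤ phi v S₁ i := by
  apply div_le_div_of_nonneg_left (hv i).le (denom_pos hv S₁)
  exact add_le_add_right (Finset.sum_le_sum_of_subset_of_nonneg h fun j _ _ => (hv j).le) 1

lemma step_eq (S : Finset (Fin n)) (a : ℝ) (f : Fin n → ℝ) :
    phi0 v S * a + ∑ i ∈ S, phi v S i * f i = a + ∑ i ∈ S, phi v S i * (f i - a) := by
  have h := phi0_add_sum hv S
  have e : ∑ i ∈ S, phi v S i * (f i - a)
      = ∑ i ∈ S, phi v S i * f i - (∑ i ∈ S, phi v S i) * a := by
    rw [Finset.sum_mul, ← Finset.sum_sub_distrib]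
    exact Finset.sum_congr rfl fun i _ => by ring
  rw [e]; linear_combination a * h

lemma dpVal_mono (U : Finset (Fin n)) (t : ℕ) :
    ∀ ℓ ℓ' : Fin n → ℕ, (∀ i, ℓ i ≤ ℓ' i) → dpVal v U t ℓ ≤ dpVal v U t ℓ' := by
  induction t with
  | zero =>
    intro ℓ ℓ' h
    simp only [dpVal]
    exact_mod_cast Finset.sup_mono_fun fun i _ => h i
  | succ t ih =>
    intro ℓ ℓ' h
    simp only [dpVal]
    apply Finset.sup'_le
    intro S hS
    refine le_trans ?_ (Finset.le_sup' _ hS)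
    refine add_le_add (mul_le_mul_of_nonneg_left (ih ℓ ℓ' h) (phi0_nonneg hv S)) ?_
    refine Finset.sum_le_sum fun i _ => mul_le_mul_of_nonneg_left ?_ (phi_nonneg hv S i)
    refine ih _ _ fun j => ?_
    rcases eq_or_ne j i with rfl | hj
    · simpa using Nat.add_le_add_right (h j) 1
    · simpa [Function.update_of_ne hj] using h j

lemma dpVal_subadd (U₁ U₂ : Finset (Fin n)) (t : ℕ) :
    ∀ ℓ₁ ℓ₂ : Fin n → ℕ,
      dpVal v (U₁ ∪ U₂) t (fun i => ℓ₁ i + ℓ₂ i) ≤ dpVal v U₁ t ℓ₁ + dpVal v U₂ t ℓ₂ := by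
  induction t with
  | zero =>
    intro ℓ₁ ℓ₂
    simp only [dpVal]
    rw [← Nat.cast_add]
    apply Nat.cast_le.2
    exact Finset.sup_le fun i _ =>
      add_le_add (Finset.le_sup (Finset.mem_univ i)) (Finset.le_sup (Finset.mem_univ i))
  | succ t ih =>
    intro ℓ₁ ℓ₂
    conv_lhs => rw [dpVal]
    apply Finset.sup'_le
    intro S hS
    rw [Finset.mem_powerset] at hS
    set ℓ : Fin n → ℕ := fun i => ℓ₁ i + ℓ₂ i with hℓ
    set S₁ := S ∩ U₁ with hS₁def
    set S₂ := S \ U₁ with hS₂def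
    have hS₁U : S₁ ⊆ U₁ := Finset.inter_subset_right
    have hS₂U : S₂ ⊆ U₂ := by
      intro i hi
      rw [hS₂def, Finset.mem_sdiff] at hi
      rcases Finset.mem_union.1 (hS hi.1) with h | h
      · exact absurd h hi.2
      · exact h
    have hdisj : Disjoint S₁ S₂ := by
      rw [Finset.disjoint_left]
      intro a ha hb
      exact (Finset.mem_sdiff.1 hb).2 (Finset.mem_inter.1 ha).2
    have hunion : S₁ ∪ S₂ = S := by
      ext a
      simp only [hS₁def, hS₂def, Finset.mem_union, Finset.mem_inter, Finset.mem_sdiff]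
      tauto
    have hS₁S : S₁ ⊆ S := hunion ▸ Finset.subset_union_left
    have hS₂S : S₂ ⊆ S := hunion ▸ Finset.subset_union_right
    set A := dpVal v U₁ t ℓ₁ with hA
    set B := dpVal v U₂ t ℓ₂ with hB
    set A1 : Fin n → ℝ := fun i => dpVal v U₁ t (Function.update ℓ₁ i (ℓ₁ i + 1)) with hA1
    set B2 : Fin n → ℝ := fun i => dpVal v U₂ t (Function.update ℓ₂ i (ℓ₂ i + 1)) with hB2
    have hAB : dpVal v (U₁ ∪ U₂) t ℓ ≤ A + B := ih ℓ₁ ℓ₂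
    have key1 : ∀ i ∈ S₁,
        dpVal v (U₁ ∪ U₂) t (Function.update ℓ i (ℓ i + 1)) ≤ A1 i + B := by
      intro i _
      have heq : Function.update ℓ i (ℓ i + 1)
          = fun j => Function.update ℓ₁ i (ℓ₁ i + 1) j + ℓ₂ j := by
        funext j
        rcases eq_or_ne j i with rfl | hj
        · simp [hℓ]; omega
        · simp [Function.update_of_ne hj, hℓ]
      rw [heq]; exact ih _ _
    have key2 : ∀ i ∈ S₂,
        dpVal v (U₁ ∪ U₂) t (Function.update ℓ i (ℓ i + 1)) ≤ A + B2 i := by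
      intro i _
      have heq : Function.update ℓ i (ℓ i + 1)
          = fun j => ℓ₁ j + Function.update ℓ₂ i (ℓ₂ i + 1) j := by
        funext j
        rcases eq_or_ne j i with rfl | hj
        · simp [hℓ]; omega
        · simp [Function.update_of_ne hj, hℓ]
      rw [heq]; exact ih _ _
    have hmonoA : ∀ i, A ≤ A1 i := by
      intro i
      apply dpVal_mono hv U₁ t
      intro j
      rcases eq_or_ne j i with rfl | hj
      · simp
      · simp [Function.update_of_ne hj]
    have hmonoB : ∀ i, B ≤ B2 i := by
      intro i
      apply dpVal_mono hv U₂ t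
      intro j
      rcases eq_or_ne j i with rfl | hj
      · simp
      · simp [Function.update_of_ne hj]
    have hw : phi0 v S + ((∑ i ∈ S₁, phi v S i) + ∑ i ∈ S₂, phi v S i) = 1 := by
      rw [← Finset.sum_union hdisj, hunion]
      exact phi0_add_sum hv S
    calc phi0 v S * dpVal v (U₁ ∪ U₂) t ℓ
          + ∑ i ∈ S, phi v S i * dpVal v (U₁ ∪ U₂) t (Function.update ℓ i (ℓ i + 1))
        ≤ phi0 v S * (A + B)
          + ((∑ i ∈ S₁, phi v S i * (A1 i + B)) + ∑ i ∈ S₂, phi v S i * (A + B2 i)) := by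
          have hsplit : ∀ f : Fin n → ℝ,
              ∑ i ∈ S, f i = ∑ i ∈ S₁, f i + ∑ i ∈ S₂, f i := fun f => by
            rw [← hunion, Finset.sum_union hdisj]
          rw [hsplit]
          refine add_le_add (mul_le_mul_of_nonneg_left hAB (phi0_nonneg hv S)) (add_le_add ?_ ?_)
          · exact Finset.sum_le_sum fun i hi =>
              mul_le_mul_of_nonneg_left (key1 i hi) (phi_nonneg hv S i)
          · exact Finset.sum_le_sum fun i hi =>
              mul_le_mul_of_nonneg_left (key2 i hi) (phi_nonneg hv S i)
      _ = (A + B) + ((∑ i ∈ S₁, phi v S i * (A1 i - A)) + ∑ i ∈ S₂, phi v S i * (B2 i - B)) := by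
          have e1 : ∑ i ∈ S₁, phi v S i * (A1 i + B)
              = (∑ i ∈ S₁, phi v S i * (A1 i - A)) + (∑ i ∈ S₁, phi v S i) * (A + B) := by
            rw [Finset.sum_mul, ← Finset.sum_add_distrib]
            exact Finset.sum_congr rfl fun i _ => by ring
          have e2 : ∑ i ∈ S₂, phi v S i * (A + B2 i)
              = (∑ i ∈ S₂, phi v S i * (B2 i - B)) + (∑ i ∈ S₂, phi v S i) * (A + B) := by
            rw [Finset.sum_mul, ← Finset.sum_add_distrib]
            exact Finset.sum_congr rfl fun i _ => by ring
          rw [e1, e2]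
          linear_combination (A + B) * hw
      _ ≤ (A + B) + ((∑ i ∈ S₁, phi v S₁ i * (A1 i - A)) + ∑ i ∈ S₂, phi v S₂ i * (B2 i - B)) := by
          refine add_le_add_right (add_le_add ?_ ?_) _
          · exact Finset.sum_le_sum fun i hi =>
              mul_le_mul_of_nonneg_right (phi_anti hv hS₁S i) (sub_nonneg.2 (hmonoA i))
          · exact Finset.sum_le_sum fun i hi =>
              mul_le_mul_of_nonneg_right (phi_anti hv hS₂S i) (sub_nonneg.2 (hmonoB i))
      _ = (phi0 v S₁ * A + ∑ i ∈ S₁, phi v S₁ i * A1 i)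
          + (phi0 v S₂ * B + ∑ i ∈ S₂, phi v S₂ i * B2 i) := by
          rw [step_eq hv S₁ A A1, step_eq hv S₂ B B2]; ring
      _ ≤ dpVal v U₁ (t + 1) ℓ₁ + dpVal v U₂ (t + 1) ℓ₂ := by
          refine add_le_add ?_ ?_
          · conv_rhs => rw [dpVal]
            exact Finset.le_sup' (fun S => phi0 v S * dpVal v U₁ t ℓ₁ +
              ∑ i ∈ S, phi v S i * dpVal v U₁ t (Function.update ℓ₁ i (ℓ₁ i + 1)))
              (Finset.mem_powerset.2 hS₁U)
          · conv_rhs => rw [dpVal]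
            exact Finset.le_sup' (fun S => phi0 v S * dpVal v U₂ t ℓ₂ +
              ∑ i ∈ S, phi v S i * dpVal v U₂ t (Function.update ℓ₂ i (ℓ₂ i + 1)))
              (Finset.mem_powerset.2 hS₂U)

end aux

/-- The optimal dynamic value is subadditive in the universe of products. -/
theorem dpOpt_subadditive
    (n T : ℕ) (v : Fin n → ℝ) (hv : ∀ i, 0 < v i) (U₁ U₂ : Finset (Fin n)) :
    dpOpt v (U₁ ∪ U₂) T ≤ dpOpt v U₁ T + dpOpt v U₂ T := by
  have := dpVal_subadd hv U₁ U₂ T (fun _ => 0) (fun _ => 0)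
  simpa [dpOpt] using this
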